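/- Let r : ℝⁿ → ℝⁿ be continuous with r(0) = e₁, let V ⊆ ℝⁿ be an open neighborhood of 0, and let u : V → ℝⁿ be a C¹ map such that u(0, x^♭) = (0, x^♭) for every point (0, x^♭) ∈ V and ∂u/∂x₁(x) = r(u(x)) for every x ∈ V. Then u(0) = 0, the Fréchet derivative of u at 0 is the identity map, and u is a local C¹ diffeomorphism at 0: there exist open neighborhoods U₁, U₂ of 0 such that u restricts to a bijection from U₁ onto U₂ whose inverse is C¹. -/

import Mathlib

/-- Partially normalized coordinates form a local diffeomorphism.
Let `r : ℝⁿ → ℝⁿ` be continuous with `r(0) = e₁`, `V` an open neighborhood of `0`,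
and `u : V → ℝⁿ` a `C¹` map such that `u(0, x^♭) = (0, x^♭)` for points of `V` with first
coordinate zero and `∂u/∂x₁(x) = r(u(x))` on `V`. Then `u(0) = 0`, `Du(0) = id`, and `u` is
a local `C¹` diffeomorphism at `0`. -/
theorem statement4 (n : ℕ) (hn : 0 < n)
    (r : (Fin n → ℝ) → (Fin n → ℝ)) (hr : Continuous r)
    (hr0 : r 0 = Pi.single (⟨0, hn⟩ : Fin n) 1)
    (V : Set (Fin n → ℝ)) (hV : IsOpen V) (h0V : (0 : Fin n → ℝ) ∈ V)
    (u : (Fin n → ℝ) → (Fin n → ℝ)) (hu : ContDiffOn ℝ 1 u V)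
    (hinit : ∀ x ∈ V, x ⟨0, hn⟩ = 0 → u x = x)
    (hflow : ∀ x ∈ V, fderiv ℝ u x (Pi.single (⟨0, hn⟩ : Fin n) 1) = r (u x)) :
    u 0 = 0 ∧
    fderiv ℝ u 0 = ContinuousLinearMap.id ℝ (Fin n → ℝ) ∧
    ∃ U₁ U₂ : Set (Fin n → ℝ), IsOpen U₁ ∧ IsOpen U₂ ∧
      (0 : Fin n → ℝ) ∈ U₁ ∧ (0 : Fin n → ℝ) ∈ U₂ ∧
      Set.BijOn u U₁ U₂ ∧
      ∃ g : (Fin n → ℝ) → (Fin n → ℝ), ContDiffOn ℝ 1 g U₂ ∧ Set.InvOn g u U₁ U₂ := by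
  have hVnhds : V ∈ nhds (0 : Fin n → ℝ) := hV.mem_nhds h0V
  have hCA : ContDiffAt ℝ 1 u 0 := hu.contDiffAt hVnhds
  have hdiff : DifferentiableAt ℝ u 0 := hCA.differentiableAt one_ne_zero
  have hu0 : u 0 = 0 := hinit 0 h0V rfl
  -- the derivative at 0 is the identity
  have hf' : fderiv ℝ u 0 = ContinuousLinearMap.id ℝ (Fin n → ℝ) := by
    apply ContinuousLinearMap.coe_injective
    apply Module.Basis.ext (Pi.basisFun ℝ (Fin n))
    intro i
    simp only [Pi.basisFun_apply, ContinuousLinearMap.coe_coe, LinearMap.id_coe, id_eq]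
    rcases eq_or_ne i ⟨0, hn⟩ with hi | hi
    · subst hi
      rw [hflow 0 h0V, hu0, hr0]; rfl
    · -- direction orthogonal to e₁ : u is the identity on the hyperplane
      have hcurve : HasDerivAt (fun t : ℝ => t • (Pi.single i 1 : Fin n → ℝ))
          ((Pi.single i 1 : Fin n → ℝ)) 0 := by
        simpa using (hasDerivAt_id (0 : ℝ)).smul_const ((Pi.single i 1 : Fin n → ℝ))
      have h1 : HasDerivAt (fun t : ℝ => u (t • (Pi.single i 1 : Fin n → ℝ)))
          (fderiv ℝ u 0 (Pi.single i 1 : Fin n → ℝ)) 0 := by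
        have h1' := HasFDerivAt.comp_hasDerivAt (f := fun t : ℝ => t • (Pi.single i 1 : Fin n → ℝ))
          0 (by simpa only [zero_smul] using hdiff.hasFDerivAt) hcurve
        exact h1'
      have heq : (fun t : ℝ => u (t • (Pi.single i 1 : Fin n → ℝ)))
          =ᶠ[nhds (0 : ℝ)] (fun t : ℝ => t • (Pi.single i 1 : Fin n → ℝ)) := by
        have hcont : Continuous (fun t : ℝ => t • (Pi.single i 1 : Fin n → ℝ)) :=
          continuous_id.smul continuous_const
        have hmem : ∀ᶠ t : ℝ in nhds 0, (t • (Pi.single i 1 : Fin n → ℝ)) ∈ V := by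
          have : Filter.Tendsto (fun t : ℝ => t • (Pi.single i 1 : Fin n → ℝ)) (nhds 0) (nhds 0) := by
            simpa using hcont.tendsto 0
          exact this.eventually_mem hVnhds
        filter_upwards [hmem] with t ht
        refine hinit _ ht ?_
        simp [Pi.single_eq_of_ne (Ne.symm hi)]
      have h2 : HasDerivAt (fun t : ℝ => u (t • (Pi.single i 1 : Fin n → ℝ)))
          ((Pi.single i 1 : Fin n → ℝ)) 0 := hcurve.congr_of_eventuallyEq heq
      exact h1.unique h2
  refine ⟨hu0, hf', ?_⟩
  -- inverse function theorem
  have hFD : HasFDerivAt u ((ContinuousLinearEquiv.refl ℝ (Fin n → ℝ) :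
      (Fin n → ℝ) →L[ℝ] (Fin n → ℝ))) 0 := by
    have := hdiff.hasFDerivAt
    rwa [hf'] at this
  set H := hCA.toOpenPartialHomeomorph u hFD one_ne_zero with hH
  have hHcoe : ⇑H = u := rfl
  have h0src : (0 : Fin n → ℝ) ∈ H.source := hCA.mem_toOpenPartialHomeomorph_source hFD one_ne_zero
  have h0tgt : (0 : Fin n → ℝ) ∈ H.target := by
    have := hCA.image_mem_toOpenPartialHomeomorph_target hFD one_ne_zero
    rwa [hu0] at this
  -- the inverse is C¹ near 0
  have hleft : ∀ x ∈ H.source, H.symm (u x) = x := fun x hx => H.left_inv hx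
  have hright : ∀ y ∈ H.target, u (H.symm y) = y := fun y hy => H.right_inv hy
  have hsymm0 : H.symm 0 = 0 := by
    have := hleft 0 h0src
    rwa [hu0] at this
  have hgCA : ContDiffAt ℝ 1 H.symm 0 := by
    refine H.contDiffAt_symm (f₀' := ContinuousLinearEquiv.refl ℝ (Fin n → ℝ)) h0tgt ?_ ?_
    · rw [hsymm0]; exact hFD
    · rw [hsymm0]; exact hCA
  obtain ⟨s, hs_mem, hs⟩ := hgCA.contDiffOn le_rfl (by simp)
  have hint : (0 : Fin n → ℝ) ∈ interior s := mem_interior_iff_mem_nhds.2 hs_mem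
  refine ⟨H.source ∩ u ⁻¹' (H.target ∩ interior s), H.target ∩ interior s,
    ?_, H.open_target.inter isOpen_interior,
    ⟨h0src, by simp only [Set.mem_preimage, hu0]; exact ⟨h0tgt, hint⟩⟩,
    ⟨h0tgt, hint⟩, ?_, H.symm, ?_, ?_, ?_⟩
  · have := H.isOpen_inter_preimage (s := H.target ∩ interior s) (H.open_target.inter isOpen_interior)
    rwa [hHcoe] at this
  · constructor
    · intro x hx; exact hx.2
    constructor
    · exact fun x hx y hy hxy => H.injOn hx.1 hy.1 hxy
    · rintro y ⟨hyt, hys⟩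
      refine ⟨H.symm y, ⟨H.map_target hyt, ?_⟩, hright y hyt⟩
      simp only [Set.mem_preimage, hright y hyt]
      exact ⟨hyt, hys⟩
  · exact hs.mono (fun y hy => interior_subset hy.2)
  · exact fun x hx => hleft x hx.1
  · exact fun y hy => hright y hy.1
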